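/- Let D⊆F₄⁺ be an orthogonal non-singular rook placement and let ξ₁, ξ₂ : D→ℂ∖{0} be distinct maps. Then the associated coadjoint orbits do not coincide: Ω_{D,ξ₁} ≠ Ω_{D,ξ₂}. -/

import Mathlib

open scoped RealInnerProductSpace

/-- The standard basis vectors `ε₁, ε₂, ε₃, ε₄` of `ℝ⁴` (indexed by `Fin 4`). -/
noncomputable def eps (i : Fin 4) : EuclideanSpace ℝ (Fin 4) := EuclideanSpace.single i 1

/-- The set of positive roots of the root system `F₄`:
`{εᵢ} ∪ {εᵢ−εⱼ, εᵢ+εⱼ : i<j} ∪ {(ε₁±ε₂±ε₃±ε₄)/2}`. -/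
noncomputable def F4pos : Set (EuclideanSpace ℝ (Fin 4)) :=
  {v | (∃ i, v = eps i) ∨
       (∃ i j : Fin 4, i < j ∧ (v = eps i - eps j ∨ v = eps i + eps j)) ∨
       (∃ s : Fin 4 → ℝ, s 0 = 1 ∧ (∀ k, s k = 1 ∨ s k = -1) ∧
          v = (1/2 : ℝ) • ∑ k, s k • eps k)}

/-- The simple roots `α₁ = ε₂−ε₃`, `α₂ = ε₃−ε₄`, `α₃ = ε₄`, `α₄ = (ε₁−ε₂−ε₃−ε₄)/2` of `F₄`. -/
noncomputable def sroot : Fin 4 → EuclideanSpace ℝ (Fin 4) :=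
  ![eps 1 - eps 2, eps 2 - eps 3, eps 3, (1/2 : ℝ) • (eps 0 - eps 1 - eps 2 - eps 3)]

/-- The full root system `F₄ = F₄⁺ ∪ (−F₄⁺)`. -/
def F4all : Set (EuclideanSpace ℝ (Fin 4)) := {v | v ∈ F4pos ∨ -v ∈ F4pos}

/-- The exponential of a (nilpotent) endomorphism, as a finite sum. -/
noncomputable def expNil {M : Type*} [AddCommGroup M] [Module ℂ M] (A : Module.End ℂ M) :
    Module.End ℂ M :=
  ∑ k ∈ Finset.range (nilpotencyClass A), (k.factorial : ℂ)⁻¹ • A ^ k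

/-- The coadjoint orbit of a linear form `f ∈ 𝔫*`: all `f ∘ exp(−ad x)`, `x ∈ 𝔫`. -/
noncomputable def orbitOf {n : Type*} [LieRing n] [LieAlgebra ℂ n] (f : Module.Dual ℂ n) :
    Set (Module.Dual ℂ n) :=
  {lam | ∃ x : n, lam = f.comp (expNil (-(LieAlgebra.ad ℂ n x)))}

/-- `x ≤ y` iff `y − x` is a (possibly empty) sum of positive roots of `F₄`. -/
def rootLE (x y : EuclideanSpace ℝ (Fin 4)) : Prop :=
  ∃ M : Multiset (EuclideanSpace ℝ (Fin 4)), (∀ g ∈ M, g ∈ F4pos) ∧ y - x = M.sum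

/-- `x < y` iff `x ≤ y` and `x ≠ y`. -/
def rootLT (x y : EuclideanSpace ℝ (Fin 4)) : Prop := rootLE x y ∧ x ≠ y


/-- The weight functional `v ↦ 16 v₀ + 8 v₁ + 4 v₂ + 2 v₃`, positive on all positive roots. -/
noncomputable def wt : EuclideanSpace ℝ (Fin 4) →ₗ[ℝ] ℝ where
  toFun v := 16 * v 0 + 8 * v 1 + 4 * v 2 + 2 * v 3
  map_add' a b := by simp only [PiLp.add_apply]; ring
  map_smul' c a := by simp only [PiLp.smul_apply, smul_eq_mul, RingHom.id_apply]; ring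

lemma wt_eps0 : wt (eps 0) = 16 := by
  simp [wt, eps, EuclideanSpace.single_apply]
lemma wt_eps1 : wt (eps 1) = 8 := by
  simp [wt, eps, EuclideanSpace.single_apply]
lemma wt_eps2 : wt (eps 2) = 4 := by
  simp [wt, eps, EuclideanSpace.single_apply]
lemma wt_eps3 : wt (eps 3) = 2 := by
  simp [wt, eps, EuclideanSpace.single_apply]

lemma wt_bounds {v : EuclideanSpace ℝ (Fin 4)} (hv : v ∈ F4pos) :
    (1 : ℝ) ≤ wt v ∧ wt v ≤ 24 := by
  obtain (⟨i, rfl⟩ | ⟨i, j, hij, (rfl | rfl)⟩ | ⟨s, hs0, hs, rfl⟩) := hv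
  · fin_cases i <;> simp [wt_eps0, wt_eps1, wt_eps2, wt_eps3] <;> norm_num
  · fin_cases i <;> fin_cases j <;>
      first
        | exact absurd hij (by decide)
        | (rw [map_sub] <;>
            simp [wt_eps0, wt_eps1, wt_eps2, wt_eps3] <;> norm_num)
  · fin_cases i <;> fin_cases j <;>
      first
        | exact absurd hij (by decide)
        | (rw [map_add] <;>
            simp [wt_eps0, wt_eps1, wt_eps2, wt_eps3] <;> norm_num)
  · rw [map_smul]
    have h : wt (∑ k, s k • eps k) = ∑ k, s k * wt (eps k) := by
      rw [map_sum]
      refine Finset.sum_congr rfl fun k _ => ?_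
      rw [map_smul, smul_eq_mul]
    rw [h, Fin.sum_univ_four, wt_eps0, wt_eps1, wt_eps2, wt_eps3, hs0]
    rcases hs 1 with h1 | h1 <;> rcases hs 2 with h2 | h2 <;> rcases hs 3 with h3 | h3 <;>
      rw [h1, h2, h3] <;> norm_num

theorem stmt17
    -- the simple complex Lie algebra `𝔤` of type `F₄`, with a Chevalley-type basis
    -- `{h₁,…,h₄} ∪ {e_γ : γ ∈ F₄}`: here `h i = b (Sum.inl i)` and `e_γ = b (Sum.inr γ)`
    {g : Type*} [LieRing g] [LieAlgebra ℂ g]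
    (b : Module.Basis (Fin 4 ⊕ F4all) ℂ g)
    (hHH : ∀ i j : Fin 4, ⁅b (Sum.inl i), b (Sum.inl j)⁆ = 0)
    (hHE : ∀ (i : Fin 4) (γ : F4all), ⁅b (Sum.inl i), b (Sum.inr γ)⁆ =
      ((2 * ⟪(γ : EuclideanSpace ℝ (Fin 4)), sroot i⟫ / ⟪sroot i, sroot i⟫ : ℝ) : ℂ) •
        b (Sum.inr γ))
    (N : F4all → F4all → ℂ)
    (hNbr : ∀ γ δ : F4all, ∀ h : (γ : EuclideanSpace ℝ (Fin 4)) + δ ∈ F4all,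
      ⁅b (Sum.inr γ), b (Sum.inr δ)⁆ =
        N γ δ • b (Sum.inr ⟨(γ : EuclideanSpace ℝ (Fin 4)) + δ, h⟩))
    (hN0 : ∀ γ δ : F4all,
      (γ : EuclideanSpace ℝ (Fin 4)) + (δ : EuclideanSpace ℝ (Fin 4)) ∈ F4all → N γ δ ≠ 0)
    -- `[e_γ, e_{−γ}]` lies in the span of the `hᵢ` and acts on each `e_δ`
    -- by the scalar `2(δ,γ)/(γ,γ)`
    (hCart : ∀ γ : F4all, ∀ h : -(γ : EuclideanSpace ℝ (Fin 4)) ∈ F4all, ∃ t : Fin 4 → ℂ,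
      ⁅b (Sum.inr γ), b (Sum.inr ⟨-(γ : EuclideanSpace ℝ (Fin 4)), h⟩)⁆ =
        ∑ i, t i • b (Sum.inl i) ∧
      ∀ δ : F4all, ⁅∑ i, t i • b (Sum.inl i), b (Sum.inr δ)⁆ =
        ((2 * ⟪(δ : EuclideanSpace ℝ (Fin 4)), (γ : EuclideanSpace ℝ (Fin 4))⟫ /
            ⟪(γ : EuclideanSpace ℝ (Fin 4)), (γ : EuclideanSpace ℝ (Fin 4))⟫ : ℝ) : ℂ) •
          b (Sum.inr δ))
    (hzero : ∀ γ δ : F4all,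
      (γ : EuclideanSpace ℝ (Fin 4)) + (δ : EuclideanSpace ℝ (Fin 4)) ∉ F4all →
      (γ : EuclideanSpace ℝ (Fin 4)) + (δ : EuclideanSpace ℝ (Fin 4)) ≠ 0 →
      ⁅b (Sum.inr γ), b (Sum.inr δ)⁆ = 0)
    -- `𝔫 = span{e_γ : γ ∈ F₄⁺}` is the nilpotent subalgebra of `𝔤` spanned by the
    -- positive root vectors; we realize it as a Lie algebra `n` with basis `(e_γ)_{γ∈F₄⁺}`
    -- embedded in `𝔤` via `ι`
    {n : Type*} [LieRing n] [LieAlgebra ℂ n]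
    (e : Module.Basis F4pos ℂ n)
    (ι : n →ₗ⁅ℂ⁆ g) (hinj : Function.Injective ι)
    (hιe : ∀ γ : F4pos,
      ι (e γ) = b (Sum.inr ⟨(γ : EuclideanSpace ℝ (Fin 4)), Or.inl γ.2⟩))
    (hnil : ∀ x : n, IsNilpotent (LieAlgebra.ad ℂ n x))
    (D : Finset F4pos)
    -- `D` is an orthogonal non-singular rook placement
    (hrook : ∀ γ ∈ D, ∀ δ ∈ D, (γ : EuclideanSpace ℝ (Fin 4)) ≠ δ →
      ⟪(γ : EuclideanSpace ℝ (Fin 4)), (δ : EuclideanSpace ℝ (Fin 4))⟫ ≤ 0)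
    (horth : ∀ γ ∈ D, ∀ δ ∈ D, (γ : EuclideanSpace ℝ (Fin 4)) ≠ δ →
      ⟪(γ : EuclideanSpace ℝ (Fin 4)), (δ : EuclideanSpace ℝ (Fin 4))⟫ = 0)
    (hns : ∀ γ ∈ D, ∀ δ ∈ D, (γ : EuclideanSpace ℝ (Fin 4)) ≠ δ →
      (γ : EuclideanSpace ℝ (Fin 4)) - (δ : EuclideanSpace ℝ (Fin 4)) ∉ F4pos)
    (ξ₁ ξ₂ : F4pos → ℂ)
    (hξ₁ : ∀ γ ∈ D, ξ₁ γ ≠ 0) (hξ₂ : ∀ γ ∈ D, ξ₂ γ ≠ 0)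
    -- the maps `ξ₁, ξ₂ : D → ℂˣ` are distinct
    (hne : ∃ γ ∈ D, ξ₁ γ ≠ ξ₂ γ) :
    orbitOf (∑ γ ∈ D, ξ₁ γ • e.coord γ) ≠ orbitOf (∑ γ ∈ D, ξ₂ γ • e.coord γ) := by
  classical
  intro hEq
  -- abbreviations
  set f₁ : Module.Dual ℂ n := ∑ γ ∈ D, ξ₁ γ • e.coord γ with hf₁def
  set f₂ : Module.Dual ℂ n := ∑ γ ∈ D, ξ₂ γ • e.coord γ with hf₂def
  -- evaluation of the forms on basis vectors
  have feval : ∀ (ξ : F4pos → ℂ) (m : F4pos),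
      (∑ γ ∈ D, ξ γ • e.coord γ) (e m) = if m ∈ D then ξ m else 0 := by
    intro ξ m
    rw [LinearMap.sum_apply]
    have hterm : ∀ γ ∈ D, (ξ γ • e.coord γ) (e m) = if γ = m then ξ γ else 0 := by
      intro γ _
      rw [LinearMap.smul_apply, Module.Basis.coord_apply, Module.Basis.repr_self, Finsupp.single_apply]
      by_cases h : γ = m
      · subst h; simp
      · rw [if_neg (fun hh : m = γ => h hh.symm), if_neg h, smul_zero]
    rw [Finset.sum_congr rfl hterm, Finset.sum_ite_eq' D m ξ]
  have hwpos : ∀ m : F4pos, (1:ℝ) ≤ wt (m : EuclideanSpace ℝ (Fin 4)) :=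
    fun m => (wt_bounds m.2).1
  have hwle : ∀ m : F4pos, wt (m : EuclideanSpace ℝ (Fin 4)) ≤ 24 :=
    fun m => (wt_bounds m.2).2
  -- the bracket of two positive root vectors
  have hB0 : ∀ γ m : F4pos,
      ((γ : EuclideanSpace ℝ (Fin 4)) + (m : EuclideanSpace ℝ (Fin 4))) ∉ F4pos →
      ⁅e γ, e m⁆ = 0 := by
    intro γ m hnot
    apply hinj
    rw [LieHom.map_lie, hιe, hιe, map_zero]
    apply hzero ⟨(γ : EuclideanSpace ℝ (Fin 4)), Or.inl γ.2⟩
      ⟨(m : EuclideanSpace ℝ (Fin 4)), Or.inl m.2⟩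
    · rintro (h | h)
      · exact hnot h
      · have hb := (wt_bounds h).1
        have h1 := hwpos γ; have h2 := hwpos m
        rw [map_neg, map_add] at hb
        linarith
    · intro h0
      have h1 := hwpos γ; have h2 := hwpos m
      have hz : wt ((γ : EuclideanSpace ℝ (Fin 4)) + (m : EuclideanSpace ℝ (Fin 4))) = 0 := by
        rw [h0, map_zero]
      rw [map_add] at hz; linarith
  have hB1 : ∀ γ m : F4pos,
      ∀ h : ((γ : EuclideanSpace ℝ (Fin 4)) + (m : EuclideanSpace ℝ (Fin 4))) ∈ F4pos,
      ∃ c : ℂ, ⁅e γ, e m⁆ = c • e ⟨_, h⟩ := by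
    intro γ m h
    refine ⟨N ⟨(γ : EuclideanSpace ℝ (Fin 4)), Or.inl γ.2⟩
      ⟨(m : EuclideanSpace ℝ (Fin 4)), Or.inl m.2⟩, hinj ?_⟩
    rw [LieHom.map_lie, hιe, hιe, map_smul, hιe]
    exact hNbr _ _ (Or.inl h)
  -- the key expansion lemma
  have hE : ∀ (gl : Module.Dual ℂ n) (m : F4pos),
      (∀ ν : F4pos, (∃ γ : F4pos,
        (ν : EuclideanSpace ℝ (Fin 4)) =
          (γ : EuclideanSpace ℝ (Fin 4)) + (m : EuclideanSpace ℝ (Fin 4))) → gl (e ν) = 0) →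
      ∀ y : n, gl ⁅y, e m⁆ = 0 := by
    intro gl m h0 y
    let R : n →ₗ[ℂ] n :=
      { toFun := fun z => ⁅z, e m⁆
        map_add' := fun a b => add_lie a b (e m)
        map_smul' := fun c a => smul_lie c a (e m) }
    have hR : gl ∘ₗ R = 0 := by
      apply e.ext
      intro γ
      show gl ⁅e γ, e m⁆ = (0 : Module.Dual ℂ n) (e γ)
      rw [LinearMap.zero_apply]
      by_cases h : ((γ : EuclideanSpace ℝ (Fin 4)) + (m : EuclideanSpace ℝ (Fin 4))) ∈ F4pos
      · obtain ⟨c, hc⟩ := hB1 γ m h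
        rw [hc, map_smul, h0 ⟨_, h⟩ ⟨γ, rfl⟩, smul_zero]
      · rw [hB0 γ m h, map_zero]
    have hy := LinearMap.ext_iff.mp hR y
    simpa [R] using hy
  -- nontriviality
  have hm0 : eps 0 ∈ F4pos := Or.inl ⟨0, rfl⟩
  haveI hnontriv : Nontrivial n := nontrivial_of_ne (e ⟨eps 0, hm0⟩) 0 (e.ne_zero _)
  haveI hEndnt : Nontrivial (Module.End ℂ n) := by
    refine ⟨1, 0, fun h => e.ne_zero ⟨eps 0, hm0⟩ ?_⟩
    have := LinearMap.ext_iff.mp h (e ⟨eps 0, hm0⟩)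
    simpa using this
  -- `f₂` lies in the orbit of `f₁`
  have hself : f₂ ∈ orbitOf f₂ := by
    refine ⟨0, ?_⟩
    have had0 : LieAlgebra.ad ℂ n (0 : n) = 0 := map_zero _
    rw [had0, neg_zero]
    have hexp0 : expNil (0 : Module.End ℂ n) = 1 := by
      unfold expNil
      rw [nilpotencyClass_zero, Finset.sum_range_one]
      simp
    rw [hexp0]
    exact LinearMap.ext fun v => rfl
  rw [← hEq] at hself
  obtain ⟨x, hx⟩ := hself
  set A : Module.End ℂ n := -(LieAlgebra.ad ℂ n x) with hAdef
  have hAnil : IsNilpotent A := (hnil x).neg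
  have hKpos : 0 < nilpotencyClass A := pos_nilpotencyClass_iff.mpr hAnil
  have hAapp : ∀ m : F4pos, A (e m) = -⁅x, e m⁆ := by
    intro m
    rw [hAdef, LinearMap.neg_apply, LieAlgebra.ad_apply]
  -- expansion of a value of f₂ through the exponential series
  have hexpand : ∀ m : F4pos, f₂ (e m) =
      ∑ j ∈ Finset.range (nilpotencyClass A),
        ((j.factorial : ℂ)⁻¹) • f₁ ((A ^ j) (e m)) := by
    intro m
    have h1 : f₂ (e m) = f₁ (expNil A (e m)) := by rw [hx]; rfl
    have hEN : expNil A (e m) = ∑ j ∈ Finset.range (nilpotencyClass A),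
        ((j.factorial : ℂ)⁻¹) • ((A ^ j) (e m)) := by
      unfold expNil
      rw [LinearMap.sum_apply]
      exact Finset.sum_congr rfl fun j _ => LinearMap.smul_apply _ _ _
    rw [h1, hEN, map_sum f₁]
    exact Finset.sum_congr rfl fun j _ => map_smul f₁ _ _
  -- the main induction: all higher terms of the series vanish
  have main : ∀ (nn : ℕ) (m : F4pos),
      (24:ℝ) < wt (m : EuclideanSpace ℝ (Fin 4)) + nn → ∀ k : ℕ, 1 ≤ k →
      f₁ ((A ^ k) (e m)) = 0 := by
    intro nn
    induction nn with
    | zero =>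
      intro m hm k _
      exfalso
      have := hwle m
      push_cast at hm
      linarith
    | succ nn IH =>
      intro m hm k hk
      have hstep : ∀ j : ℕ, 1 ≤ j →
          ∀ ν : F4pos, (∃ γ : F4pos, (ν : EuclideanSpace ℝ (Fin 4)) =
            (γ : EuclideanSpace ℝ (Fin 4)) + (m : EuclideanSpace ℝ (Fin 4))) →
          f₁ ((A ^ j) (e ν)) = 0 := by
        rintro j hj ν ⟨γ, hν⟩
        apply IH ν ?_ j hj
        have h1 := hwpos γ
        have h2 : wt (ν : EuclideanSpace ℝ (Fin 4)) =
            wt (γ : EuclideanSpace ℝ (Fin 4)) + wt (m : EuclideanSpace ℝ (Fin 4)) := by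
          rw [hν, map_add]
        push_cast at hm ⊢
        linarith
      have h2 : ∀ j : ℕ, 1 ≤ j → f₁ ((A ^ (j + 1)) (e m)) = 0 := by
        intro j hj
        have hA1 : (A ^ (j+1)) (e m) = (A ^ j) (A (e m)) := by
          rw [pow_succ]; rfl
        rw [hA1, hAapp m, map_neg, map_neg, neg_eq_zero]
        have hh := hE (f₁ ∘ₗ (A ^ j)) m (hstep j hj) x
        simpa using hh
      rcases Nat.lt_or_ge k 2 with hk2 | hk2
      · -- k = 1
        have hk1 : k = 1 := by omega
        subst hk1
        by_cases hmD : m ∈ D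
        · have h0 : ∀ ν : F4pos, (∃ γ : F4pos, (ν : EuclideanSpace ℝ (Fin 4)) =
              (γ : EuclideanSpace ℝ (Fin 4)) + (m : EuclideanSpace ℝ (Fin 4))) →
              f₁ (e ν) = 0 := by
            rintro ν ⟨γ, hν⟩
            have hνD : ν ∉ D := by
              intro hνD
              have hne' : (ν : EuclideanSpace ℝ (Fin 4)) ≠
                  (m : EuclideanSpace ℝ (Fin 4)) := by
                intro hh
                have h1 := hwpos γ
                have h2 : wt (ν : EuclideanSpace ℝ (Fin 4)) =
                    wt (γ : EuclideanSpace ℝ (Fin 4)) +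
                      wt (m : EuclideanSpace ℝ (Fin 4)) := by
                  rw [hν, map_add]
                rw [hh] at h2
                linarith
              apply hns ν hνD m hmD hne'
              rw [hν, add_sub_cancel_right]
              exact γ.2
            rw [hf₁def, feval ξ₁ ν, if_neg hνD]
          have hA1 : (A ^ 1) (e m) = -⁅x, e m⁆ := by rw [pow_one]; exact hAapp m
          rw [hA1, map_neg, neg_eq_zero]
          exact hE f₁ m h0 x
        · -- m ∉ D : use the support constraint f₂ (e m) = 0
          rcases Nat.lt_or_ge (nilpotencyClass A) 2 with hK | hK
          · have hK1 : nilpotencyClass A = 1 := by omega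
            have hA0 : A = 0 := eq_zero_of_nilpotencyClass_eq_one hK1
            rw [hA0]
            simp
          · have hcon : f₂ (e m) = 0 := by
              rw [hf₂def, feval ξ₂ m, if_neg hmD]
            have hsum : ∑ j ∈ Finset.range (nilpotencyClass A),
                ((j.factorial : ℂ)⁻¹) • f₁ ((A ^ j) (e m)) = f₁ ((A ^ 1) (e m)) := by
              rw [Finset.sum_eq_single_of_mem 1 (Finset.mem_range.mpr (by omega))]
              · simp
              · intro j _ hj1
                rcases Nat.eq_zero_or_pos j with rfl | hjpos
                · have hfm : f₁ (e m) = 0 := by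
                    rw [hf₁def, feval ξ₁ m, if_neg hmD]
                  simp [hfm]
                · obtain ⟨j', rfl⟩ : ∃ j', j = j' + 1 := ⟨j - 1, by omega⟩
                  rw [h2 j' (by omega), smul_zero]
            have := hcon
            rw [hexpand m, hsum] at this
            exact this
      · obtain ⟨j, rfl⟩ : ∃ j, k = j + 1 := ⟨k - 1, by omega⟩
        exact h2 j (by omega)
  -- conclusion
  obtain ⟨δ, hδD, hδne⟩ := hne
  apply hδne
  have hval2 : f₂ (e δ) = ξ₂ δ := by
    rw [hf₂def, feval ξ₂ δ, if_pos hδD]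
  have hval1 : f₂ (e δ) = ξ₁ δ := by
    rw [hexpand δ, Finset.sum_eq_single_of_mem 0 (Finset.mem_range.mpr hKpos)]
    · simp only [pow_zero, Module.End.one_apply, Nat.factorial_zero, Nat.cast_one, inv_one,
        one_smul]
      rw [hf₁def, feval ξ₁ δ, if_pos hδD]
    · intro j _ hj0
      rw [main 24 δ (by have := hwpos δ; push_cast; linarith) j (by omega), smul_zero]
  exact hval1.symm.trans hval2
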